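/- Explicit first moments for branching random walk with immigration: Let G be a countable Abelian group, a a random walk kernel on G, ā(ξ,η) := a(η,ξ), and for t ≥ 0 define ā_t(ξ,η) := e^{−t} Σ_{n=0}^∞ (t^n/n!) ā^{(n)}(ξ,η) and a_t(η,ξ) := e^{−t} Σ_{n=0}^∞ (t^n/n!) a^{(n)}(η,ξ). Fix constants γ, K, λ > 0 and finitely supported initial data α(0) : G → [0,∞) and π(0) : G → ℕ₀. Then the function h_ξ(t) := e^{γKt} Σ_{η∈G} ā_t(ξ,η) ( α_η(0) + (λ/K)(1 − e^{−γKt}) π_η(0) ) satisfies h_ξ(0) = α_ξ(0) and, for every ξ ∈ G and t ≥ 0, d/dt h_ξ(t) = Σ_{η∈G} (ā(ξ,η) − δ_{ξ,η}) h_η(t) + γK h_ξ(t) + γλ Σ_{η∈G} π_η(0) a_t(η,ξ). -/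

import Mathlib

open MeasureTheory Filter Set
open scoped ENNReal NNReal BigOperators Classical

noncomputable section

/-! ### Random walk kernels and the Liggett–Spitzer weight -/

structure IsRWKernel {G : Type} [AddCommGroup G] (a : G → G → ℝ) : Prop where
  nonneg : ∀ ξ η, 0 ≤ a ξ η
  le_one : ∀ ξ η, a ξ η ≤ 1
  homog : ∀ η ξ : G, a η ξ = a 0 (ξ - η)
  total : HasSum (fun ξ : G => a 0 ξ) 1

/-- symmetrized kernel â -/
def ahat {G : Type} (a : G → G → ℝ) (ξ η : G) : ℝ := (a ξ η + a η ξ) / 2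

/-- reversed kernel ā -/
def abar {G : Type} (a : G → G → ℝ) (ξ η : G) : ℝ := a η ξ

/-- n-step iterates of a kernel -/
noncomputable def kiter {G : Type} (p : G → G → ℝ) : ℕ → G → G → ℝ
  | 0 => fun η ξ => if η = ξ then 1 else 0
  | (n + 1) => fun η ξ => ∑' ζ : G, kiter p n η ζ * p ζ ξ

/-- the Liggett–Spitzer weight ρ -/
noncomputable def LSweight {G : Type} (a : G → G → ℝ) (R : ℝ) (β : G → ℝ) (ξ : G) : ℝ :=
  ∑' η : G, ∑' n : ℕ, ((R / 2) ^ n)⁻¹ * kiter (ahat a) n η ξ * β η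

/-- the standing assumptions: `a` is a random walk kernel, `R > 2`,
`β` strictly positive and summable. -/
def IsLSData {G : Type} [AddCommGroup G] (a : G → G → ℝ) (R : ℝ) (β : G → ℝ) : Prop :=
  IsRWKernel a ∧ 2 < R ∧ (∀ η, 0 < β η) ∧ Summable β

/-- continuous-time transition kernel associated with a discrete kernel -/
noncomputable def ctk {G : Type} (p : G → G → ℝ) (t : ℝ) (η ξ : G) : ℝ :=
  Real.exp (-t) * ∑' n : ℕ, t ^ n / (n.factorial : ℝ) * kiter p n η ξ

/-! ### configurations and state spaces -/

/-- total mass at a site -/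
def xbar {G : Type} {M : ℕ} (x : G → Fin M → ℝ) (ξ : G) : ℝ := ∑ m, x ξ m

/-- the Liggett–Spitzer state space ℰ -/
def stateE {G : Type} (ρ : G → ℝ) (M : ℕ) : Set (G → Fin M → ℝ) :=
  {x | (∀ ξ m, 0 ≤ x ξ m) ∧ Summable (fun ξ => ρ ξ * xbar x ξ)}

/-- the particle state space ℰ^par = ℰ ∩ (ℕ₀^M)^G -/
def statePar {G : Type} (ρ : G → ℝ) (M : ℕ) : Set (G → Fin M → ℝ) :=
  {x | x ∈ stateE ρ M ∧ ∀ ξ m, ∃ k : ℕ, x ξ m = (k : ℝ)}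

/-- the rescaled particle state space εℰ^par -/
def stateParEps {G : Type} (ρ : G → ℝ) (M : ℕ) (ε : ℝ) : Set (G → Fin M → ℝ) :=
  {z | ∃ w ∈ statePar ρ M, z = ε • w}

/-- the configuration with a single type-`m` particle at site `ξ` -/
def evec {G : Type} {M : ℕ} (m : Fin M) (ξ : G) : G → Fin M → ℝ :=
  fun η n => if η = ξ ∧ n = m then 1 else 0

/-! ### martingale problems -/

/-- càdlàg paths -/
def IsCadlag {S : Type*} [TopologicalSpace S] (f : ℝ → S) : Prop :=
  (∀ t : ℝ, ContinuousWithinAt f (Set.Ici t) t) ∧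
  ∀ t : ℝ, ∃ L, Filter.Tendsto f (nhdsWithin t (Set.Iio t)) (nhds L)

/-- A solution of the `(Gen, Dom, ν)` martingale problem: an adapted stochastic
process on a filtered probability space, with paths satisfying `PathProp`
(càdlàg resp. continuous), taking values, at nonnegative times, in the state
space `E`, with initial law `ν`, such that for every `f ∈ Dom` the process
`f(X t) − ∫_0^t Gen f (X s) ds` is a martingale. -/
structure MPSol (S : Type) [TopologicalSpace S] [MeasurableSpace S]
    (Gen : (S → ℝ) → S → ℝ) (Dom : Set (S → ℝ)) (E : Set S)
    (PathProp : (ℝ → S) → Prop) (ν : Measure S) where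
  (Ω : Type)
  [mΩ : MeasurableSpace Ω]
  (P : Measure Ω)
  (isProb : IsProbabilityMeasure P)
  (F : MeasureTheory.Filtration ℝ mΩ)
  (X : ℝ → Ω → S)
  (adapted : MeasureTheory.Adapted F X)
  (paths : ∀ ω, PathProp fun t => X t ω)
  (mem_state : ∀ ω t, 0 ≤ t → X t ω ∈ E)
  (init_law : Measure.map (X 0) P = ν)
  (mart : ∀ f ∈ Dom,
    MeasureTheory.Martingale
      (fun t ω => f (X t ω) - ∫ s in (0:ℝ)..t, Gen f (X s ω)) F P)

attribute [instance] MPSol.mΩ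

/-! ### the particle generator -/

/-- the particle generator Ω_Z, with site sums restricted to `G'`
(take `G' = Set.univ` for the full generator). -/
noncomputable def particleGenR {G : Type} {M : ℕ} (a : G → G → ℝ)
    (γ K : Fin M → ℝ) (lam : Fin M → Fin M → ℝ) (G' : Set G)
    (f : (G → Fin M → ℝ) → ℝ) (z : G → Fin M → ℝ) : ℝ :=
  (∑' q : Fin M × G × G, (if q.2.1 ∈ G' ∧ q.2.2 ∈ G' then (1:ℝ) else 0) *
      (z q.2.1 q.1 * a q.2.1 q.2.2 *
        (f (z + evec q.1 q.2.2 - evec q.1 q.2.1) - f z)))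
  + (∑' q : Fin M × G, (if q.2 ∈ G' then (1:ℝ) else 0) *
      (γ q.1 * (1 / 2 + K q.1) * z q.2 q.1 * (f (z + evec q.1 q.2) - f z)))
  + (∑' q : Fin M × G, (if q.2 ∈ G' then (1:ℝ) else 0) *
      (γ q.1 * (1 / 2 + ∑ n, lam q.1 n * z q.2 n) * z q.2 q.1 *
        (f (z - evec q.1 q.2) - f z)))

/-- the particle generator Ω_Z -/
noncomputable def particleGen {G : Type} {M : ℕ} (a : G → G → ℝ)
    (γ K : Fin M → ℝ) (lam : Fin M → Fin M → ℝ) :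
    ((G → Fin M → ℝ) → ℝ) → (G → Fin M → ℝ) → ℝ :=
  particleGenR a γ K lam Set.univ

/-- the domain D(Ω_Z) of the particle generator: bounded measurable functions
for which the defining series converge absolutely on the state space and for
which Ω_Z f is bounded on the state space. -/
def particleDomR {G : Type} {M : ℕ} (a : G → G → ℝ) (γ K : Fin M → ℝ)
    (lam : Fin M → Fin M → ℝ) (G' : Set G) (ρ : G → ℝ) :
    Set ((G → Fin M → ℝ) → ℝ) :=
  {f | Measurable f ∧ (∃ C, ∀ z, |f z| ≤ C) ∧
    (∀ z ∈ statePar ρ M,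
      Summable (fun q : Fin M × G × G => |(if q.2.1 ∈ G' ∧ q.2.2 ∈ G' then (1:ℝ) else 0) *
        (z q.2.1 q.1 * a q.2.1 q.2.2 *
          (f (z + evec q.1 q.2.2 - evec q.1 q.2.1) - f z))|) ∧
      Summable (fun q : Fin M × G => |(if q.2 ∈ G' then (1:ℝ) else 0) *
        (γ q.1 * (1 / 2 + K q.1) * z q.2 q.1 * (f (z + evec q.1 q.2) - f z))|) ∧
      Summable (fun q : Fin M × G => |(if q.2 ∈ G' then (1:ℝ) else 0) *
        (γ q.1 * (1 / 2 + ∑ n, lam q.1 n * z q.2 n) * z q.2 q.1 *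
          (f (z - evec q.1 q.2) - f z))|)) ∧
    ∃ C, ∀ z ∈ statePar ρ M, |particleGenR a γ K lam G' f z| ≤ C}

def particleDom {G : Type} {M : ℕ} (a : G → G → ℝ) (γ K : Fin M → ℝ)
    (lam : Fin M → Fin M → ℝ) (ρ : G → ℝ) : Set ((G → Fin M → ℝ) → ℝ) :=
  particleDomR a γ K lam Set.univ ρ

/-! ### the ε-rescaled particle generator -/

/-- the ε-rescaled particle generator Ω_{Z^ε}, with site sums restricted
to `G'` (take `G' = Set.univ` for the full generator). -/
noncomputable def epsParticleGenR {G : Type} {M : ℕ} (a : G → G → ℝ)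
    (γ K : Fin M → ℝ) (lam : Fin M → Fin M → ℝ) (ε : ℝ) (G' : Set G)
    (f : (G → Fin M → ℝ) → ℝ) (z : G → Fin M → ℝ) : ℝ :=
  (∑' q : Fin M × G × G, (if q.2.1 ∈ G' ∧ q.2.2 ∈ G' then (1:ℝ) else 0) *
      ((z q.2.1 q.1 / ε) * a q.2.1 q.2.2 *
        (f (z + ε • evec q.1 q.2.2 - ε • evec q.1 q.2.1) - f z)))
  + (∑' q : Fin M × G, (if q.2 ∈ G' then (1:ℝ) else 0) *
      ((z q.2 q.1 / ε) * (γ q.1 / ε) * (1 / 2 + ε * K q.1) *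
        (f (z + ε • evec q.1 q.2) - f z)))
  + (∑' q : Fin M × G, (if q.2 ∈ G' then (1:ℝ) else 0) *
      ((z q.2 q.1 / ε) * (γ q.1 / ε) * (1 / 2 + ε * ∑ n, lam q.1 n * z q.2 n) *
        (f (z - ε • evec q.1 q.2) - f z)))

/-- the domain of the ε-rescaled particle generator. -/
def epsParticleDomR {G : Type} {M : ℕ} (a : G → G → ℝ) (γ K : Fin M → ℝ)
    (lam : Fin M → Fin M → ℝ) (ε : ℝ) (G' : Set G) (ρ : G → ℝ) :
    Set ((G → Fin M → ℝ) → ℝ) :=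
  {f | Measurable f ∧ (∃ C, ∀ z, |f z| ≤ C) ∧
    (∀ z ∈ stateParEps ρ M ε,
      Summable (fun q : Fin M × G × G => |(if q.2.1 ∈ G' ∧ q.2.2 ∈ G' then (1:ℝ) else 0) *
        ((z q.2.1 q.1 / ε) * a q.2.1 q.2.2 *
          (f (z + ε • evec q.1 q.2.2 - ε • evec q.1 q.2.1) - f z))|) ∧
      Summable (fun q : Fin M × G => |(if q.2 ∈ G' then (1:ℝ) else 0) *
        ((z q.2 q.1 / ε) * (γ q.1 / ε) * (1 / 2 + ε * K q.1) *
          (f (z + ε • evec q.1 q.2) - f z))|) ∧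
      Summable (fun q : Fin M × G => |(if q.2 ∈ G' then (1:ℝ) else 0) *
        ((z q.2 q.1 / ε) * (γ q.1 / ε) * (1 / 2 + ε * ∑ n, lam q.1 n * z q.2 n) *
          (f (z - ε • evec q.1 q.2) - f z))|)) ∧
    ∃ C, ∀ z ∈ stateParEps ρ M ε, |epsParticleGenR a γ K lam ε G' f z| ≤ C}

/-! ### the diffusion generator -/

/-- coordinate partial derivative ∂f/∂x^m_ξ -/
noncomputable def pderiv {G : Type} {M : ℕ} (m : Fin M) (ξ : G)
    (f : (G → Fin M → ℝ) → ℝ) (x : G → Fin M → ℝ) : ℝ :=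
  deriv (fun t : ℝ => f (x + t • evec m ξ)) 0

/-- all coordinate partial derivatives up to order three exist and are
continuous -/
def SmoothCoord3 {G : Type} {M : ℕ} (f : (G → Fin M → ℝ) → ℝ) : Prop :=
  Continuous f ∧
  (∀ (m : Fin M) (ξ : G),
    (∀ x, DifferentiableAt ℝ (fun t : ℝ => f (x + t • evec m ξ)) 0) ∧
    Continuous (pderiv m ξ f)) ∧
  (∀ (m₁ m₂ : Fin M) (ξ₁ ξ₂ : G),
    (∀ x, DifferentiableAt ℝ (fun t : ℝ => pderiv m₁ ξ₁ f (x + t • evec m₂ ξ₂)) 0) ∧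
    Continuous (pderiv m₂ ξ₂ (pderiv m₁ ξ₁ f))) ∧
  (∀ (m₁ m₂ m₃ : Fin M) (ξ₁ ξ₂ ξ₃ : G),
    (∀ x, DifferentiableAt ℝ
      (fun t : ℝ => pderiv m₂ ξ₂ (pderiv m₁ ξ₁ f) (x + t • evec m₃ ξ₃)) 0) ∧
    Continuous (pderiv m₃ ξ₃ (pderiv m₂ ξ₂ (pderiv m₁ ξ₁ f))))

/-- the diffusion generator Ω_X (recall ā(ξ,η) = a(η,ξ)) -/
noncomputable def diffGen {G : Type} {M : ℕ} (a : G → G → ℝ) (γ K : Fin M → ℝ)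
    (lam : Fin M → Fin M → ℝ)
    (f : (G → Fin M → ℝ) → ℝ) (x : G → Fin M → ℝ) : ℝ :=
  (∑' q : Fin M × G,
    ((∑' η : G, a η q.2 * (x η q.1 - x q.2 q.1))
      + γ q.1 * x q.2 q.1 * (K q.1 - ∑ n, lam q.1 n * x q.2 n))
    * pderiv q.1 q.2 f x)
  + (1 / 2) * ∑' q : Fin M × G, γ q.1 * x q.2 q.1 * pderiv q.1 q.2 (pderiv q.1 q.2 f) x

/-- the domain D(Ω_X): bounded continuous functions with continuous coordinate
partial derivatives up to order three, for which the series converge absolutely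
on ℰ and Ω_X f is bounded on ℰ. -/
def diffDom {G : Type} {M : ℕ} (a : G → G → ℝ) (γ K : Fin M → ℝ)
    (lam : Fin M → Fin M → ℝ) (ρ : G → ℝ) : Set ((G → Fin M → ℝ) → ℝ) :=
  {f | (∃ C, ∀ x, |f x| ≤ C) ∧ SmoothCoord3 f ∧
    (∀ x ∈ stateE ρ M,
      (∀ (m : Fin M) (ξ : G), Summable (fun η : G => |a η ξ * (x η m - x ξ m)|)) ∧
      Summable (fun q : Fin M × G =>
        |((∑' η : G, a η q.2 * (x η q.1 - x q.2 q.1))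
          + γ q.1 * x q.2 q.1 * (K q.1 - ∑ n, lam q.1 n * x q.2 n))
          * pderiv q.1 q.2 f x|) ∧
      Summable (fun q : Fin M × G =>
        |γ q.1 * x q.2 q.1 * pderiv q.1 q.2 (pderiv q.1 q.2 f) x|)) ∧
    ∃ C, ∀ x ∈ stateE ρ M, |diffGen a γ K lam f x| ≤ C}
/-! ### the dual process (exchangeable case) -/

/-- configuration with a single dual (type-m) particle at ξ -/
def ekap {G : Type} {M : ℕ} (m : Fin M) (ξ : G) : G → Fin M → ℕ :=
  fun η n => if η = ξ ∧ n = m then 1 else 0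

/-- total number of dual particles at a site -/
def kapbar {G : Type} {M : ℕ} (κ : G → Fin M → ℕ) (ξ : G) : ℕ := ∑ m, κ ξ m

/-- indicator configuration at a single site (in the α variables) -/
def e1 {G : Type} (ξ : G) : G → ℝ := fun η => if η = ξ then 1 else 0

/-- coordinate partial derivative ∂f/∂α_ξ in the α variables -/
noncomputable def aderiv {G : Type} {M : ℕ} (ξ : G)
    (f : (G → ℝ) × (G → Fin M → ℕ) → ℝ) (p : (G → ℝ) × (G → Fin M → ℕ)) : ℝ :=
  deriv (fun t : ℝ => f (p.1 + t • e1 ξ, p.2)) 0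

/-- the dual generator Ω_{(α,κ)} of the exchangeable model -/
noncomputable def dualGen {G : Type} {M : ℕ} (a : G → G → ℝ) (γ K lam : ℝ)
    (f : (G → ℝ) × (G → Fin M → ℕ) → ℝ) (p : (G → ℝ) × (G → Fin M → ℕ)) : ℝ :=
  (∑' q : Fin M × G × G,
    (p.2 q.2.1 q.1 : ℝ) * a q.2.2 q.2.1 *
      (f (p.1, fun η n => p.2 η n + ekap q.1 q.2.2 η n - ekap q.1 q.2.1 η n) - f p))
  + γ * (∑' q : Fin M × G,
      ((p.2 q.2 q.1 : ℝ) * ((p.2 q.2 q.1 : ℝ) - 1) / 2) *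
        (f (p.1, fun η n => p.2 η n - ekap q.1 q.2 η n) - f p))
  + (∑' q : G × G, a q.1 q.2 * (p.1 q.2 - p.1 q.1) * aderiv q.1 f p)
  + γ * (∑' ξ : G, p.1 ξ * (K - p.1 ξ / 2) * aderiv ξ f p)
  + γ * lam * (∑' ξ : G, p.1 ξ * aderiv ξ (aderiv ξ f) p)
  + γ * lam * (∑' ξ : G, (kapbar p.2 ξ : ℝ) * aderiv ξ f p)

/-- for each fixed κ, f(⬝,κ) is continuous with continuous coordinate partial
derivatives (in the α variables) up to order two -/
def DualSmooth {G : Type} {M : ℕ} (f : (G → ℝ) × (G → Fin M → ℕ) → ℝ) : Prop :=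
  (∀ κ, Continuous fun α : G → ℝ => f (α, κ)) ∧
  (∀ ξ : G,
    (∀ p : (G → ℝ) × (G → Fin M → ℕ),
      DifferentiableAt ℝ (fun t : ℝ => f (p.1 + t • e1 ξ, p.2)) 0) ∧
    ∀ κ, Continuous fun α : G → ℝ => aderiv ξ f (α, κ)) ∧
  (∀ ξ₁ ξ₂ : G,
    (∀ p : (G → ℝ) × (G → Fin M → ℕ),
      DifferentiableAt ℝ (fun t : ℝ => aderiv ξ₁ f (p.1 + t • e1 ξ₂, p.2)) 0) ∧
    ∀ κ, Continuous fun α : G → ℝ => aderiv ξ₂ (aderiv ξ₁ f) (α, κ))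

/-- the domain D(Ω_{(α,κ)}) of the dual generator -/
def dualDom {G : Type} {M : ℕ} (a : G → G → ℝ) (γ K lam : ℝ) :
    Set ((G → ℝ) × (G → Fin M → ℕ) → ℝ) :=
  {f | Measurable f ∧ (∃ C, ∀ p, |f p| ≤ C) ∧ DualSmooth f ∧
    (∀ p : (G → ℝ) × (G → Fin M → ℕ), (∀ ξ, 0 ≤ p.1 ξ) →
      Summable (fun q : Fin M × G × G => |(p.2 q.2.1 q.1 : ℝ) * a q.2.2 q.2.1 *
        (f (p.1, fun η n => p.2 η n + ekap q.1 q.2.2 η n - ekap q.1 q.2.1 η n) - f p)|) ∧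
      Summable (fun q : Fin M × G => |((p.2 q.2 q.1 : ℝ) * ((p.2 q.2 q.1 : ℝ) - 1) / 2) *
        (f (p.1, fun η n => p.2 η n - ekap q.1 q.2 η n) - f p)|) ∧
      Summable (fun q : G × G => |a q.1 q.2 * (p.1 q.2 - p.1 q.1) * aderiv q.1 f p|) ∧
      Summable (fun ξ : G => |p.1 ξ * (K - p.1 ξ / 2) * aderiv ξ f p|) ∧
      Summable (fun ξ : G => |p.1 ξ * aderiv ξ (aderiv ξ f) p|) ∧
      Summable (fun ξ : G => |(kapbar p.2 ξ : ℝ) * aderiv ξ f p|)) ∧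
    ∃ C, ∀ p : (G → ℝ) × (G → Fin M → ℕ), (∀ ξ, 0 ≤ p.1 ξ) →
      |dualGen a γ K lam f p| ≤ C}

/-- the duality function H((α,κ),x) -/
noncomputable def Hdual {G : Type} {M : ℕ} (α : G → ℝ) (κ : G → Fin M → ℕ)
    (x : G → Fin M → ℝ) : ℝ :=
  Real.exp (-(∑' ξ : G, α ξ * xbar x ξ)) * ∏ᶠ ξ : G, ∏ m : Fin M, x ξ m ^ κ ξ m

/-- the function β(α,κ) appearing in the Feynman–Kac correction -/
noncomputable def betaDual {G : Type} {M : ℕ} (γ K : ℝ) (α : G → ℝ)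
    (κ : G → Fin M → ℕ) : ℝ :=
  γ * ∑' ξ : G, ((∑ m, (κ ξ m : ℝ) * ((κ ξ m : ℝ) - 1) / 2)
    - α ξ * (kapbar κ ξ : ℝ) + K * (kapbar κ ξ : ℝ))

/-- the exchangeable-case Feynman–Kac exponent at time s -/
noncomputable def dualFK {G : Type} {M : ℕ} (K : ℝ) (α : G → ℝ)
    (κ : G → Fin M → ℕ) : ℝ :=
  (∑' q : Fin M × G, (κ q.2 q.1 : ℝ) * ((κ q.2 q.1 : ℝ) - 1) / 2)
  + ∑' ξ : G, (K - α ξ) * (kapbar κ ξ : ℝ)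

section Kernel
variable {G : Type} {p : G → G → ℝ}

lemma kiter_nonneg (hp0 : ∀ η ξ, 0 ≤ p η ξ) : ∀ (n : ℕ) (η ξ : G), 0 ≤ kiter p n η ξ := by
  intro n
  induction n with
  | zero => intro η ξ; simp only [kiter]; positivity
  | succ n ih => intro η ξ; exact tsum_nonneg fun ζ => mul_nonneg (ih η ζ) (hp0 ζ ξ)

lemma kiter_hasSum (hp0 : ∀ η ξ, 0 ≤ p η ξ) (hp1 : ∀ η, HasSum (p η) 1) :
    ∀ (n : ℕ) (η : G), HasSum (kiter p n η) 1 := by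
  intro n
  induction n with
  | zero =>
    intro η
    have : HasSum (fun ξ : G => if ξ = η then (1:ℝ) else 0) 1 := hasSum_ite_eq η 1
    simpa [kiter, eq_comm] using this
  | succ n ih =>
    intro η
    have hF : ∀ q : G × G, 0 ≤ kiter p n η q.1 * p q.1 q.2 :=
      fun q => mul_nonneg (kiter_nonneg hp0 n η q.1) (hp0 _ _)
    have hslice : ∀ ζ : G, HasSum (fun ξ => kiter p n η ζ * p ζ ξ) (kiter p n η ζ) := by
      intro ζ; simpa using (hp1 ζ).mul_left (kiter p n η ζ)
    have hsum : Summable (fun q : G × G => kiter p n η q.1 * p q.1 q.2) := by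
      rw [summable_prod_of_nonneg hF]
      refine ⟨fun ζ => (hslice ζ).summable, ?_⟩
      exact (ih η).summable.congr fun ζ => ((hslice ζ).tsum_eq).symm
    have htotS := hsum.hasSum
    have h1 : (∑' q : G × G, kiter p n η q.1 * p q.1 q.2) = 1 :=
      (htotS.prod_fiberwise hslice).unique (ih η)
    rw [h1] at htotS
    have htot' : HasSum (fun q : G × G => kiter p n η q.2 * p q.2 q.1) 1 :=
      (Equiv.prodComm G G).hasSum_iff.mpr htotS
    have := htot'.prod_fiberwise (fun ξ => (htot'.summable.prod_factor ξ).hasSum)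
    simpa [kiter] using this

lemma p_le_one (hp0 : ∀ η ξ, 0 ≤ p η ξ) (hp1 : ∀ η, HasSum (p η) 1) (η ξ : G) : p η ξ ≤ 1 :=
  le_hasSum (hp1 η) ξ (fun _ _ => hp0 _ _)

lemma kiter_le_one (hp0 : ∀ η ξ, 0 ≤ p η ξ) (hp1 : ∀ η, HasSum (p η) 1)
    (n : ℕ) (η ξ : G) : kiter p n η ξ ≤ 1 :=
  le_hasSum (kiter_hasSum hp0 hp1 n η) ξ (fun _ _ => kiter_nonneg hp0 n η _)

lemma kiter_succ_left (hp0 : ∀ η ξ, 0 ≤ p η ξ) (hp1 : ∀ η, HasSum (p η) 1) :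
    ∀ (n : ℕ) (η ξ : G), kiter p (n + 1) η ξ = ∑' ζ : G, p η ζ * kiter p n ζ ξ := by
  intro n
  induction n with
  | zero =>
    intro η ξ
    show (∑' ζ : G, kiter p 0 η ζ * p ζ ξ) = ∑' ζ : G, p η ζ * kiter p 0 ζ ξ
    simp only [kiter]
    rw [tsum_eq_single η (fun ζ hζ => by simp [Ne.symm hζ]),
        tsum_eq_single ξ (fun ζ hζ => by simp [hζ])]
    simp
  | succ n ih =>
    intro η ξ
    set f : G → G → ℝ := fun ζ β => p η β * kiter p n β ζ * p ζ ξ with hf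
    have hnn : ∀ ζ β, 0 ≤ f ζ β := fun ζ β => by
      have h1 := hp0 η β; have h2 := kiter_nonneg hp0 n β ζ; have h3 := hp0 ζ ξ; positivity
    have hb : ∀ ζ β, f ζ β ≤ p η β := fun ζ β => by
      have : f ζ β ≤ p η β * 1 * 1 := by
        apply mul_le_mul (mul_le_mul le_rfl (kiter_le_one hp0 hp1 n β ζ)
          (kiter_nonneg hp0 n β ζ) (hp0 η β)) (p_le_one hp0 hp1 ζ ξ) (hp0 ζ ξ)
          (mul_nonneg (hp0 η β) zero_le_one)
      simpa using this
    have hrow : ∀ ζ, Summable (f ζ) := fun ζ =>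
      Summable.of_nonneg_of_le (hnn ζ) (hb ζ) (hp1 η).summable
    have hcol : ∀ β, Summable (fun ζ => f ζ β) := fun β => by
      have : ∀ ζ, f ζ β ≤ p η β * (kiter p n β ζ * 1) := fun ζ => by
        have : f ζ β ≤ p η β * kiter p n β ζ * 1 :=
          mul_le_mul le_rfl (p_le_one hp0 hp1 ζ ξ) (hp0 ζ ξ)
            (mul_nonneg (hp0 η β) (kiter_nonneg hp0 n β ζ))
        simpa [mul_assoc] using this
      exact Summable.of_nonneg_of_le (fun ζ => hnn ζ _) this
        (((kiter_hasSum hp0 hp1 n β).summable.mul_left _).congr (fun ζ => by ring))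
    have hunc : Summable (Function.uncurry f) := by
      refine (summable_prod_of_nonneg (fun q => hnn q.1 q.2)).mpr ⟨fun ζ => hrow ζ, ?_⟩
      have heq : ∀ ζ, (∑' β, f ζ β) = kiter p (n+1) η ζ * p ζ ξ := fun ζ => by
        rw [show (∑' β, f ζ β) = (∑' β, p η β * kiter p n β ζ) * p ζ ξ by
          rw [← tsum_mul_right], ← ih η ζ]
      refine Summable.congr ?_ (fun ζ => (heq ζ).symm)
      refine Summable.of_nonneg_of_le (fun ζ => mul_nonneg (kiter_nonneg hp0 (n+1) η ζ) (hp0 ζ ξ))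
        (fun ζ => ?_) (kiter_hasSum hp0 hp1 (n+1) η).summable
      calc kiter p (n+1) η ζ * p ζ ξ ≤ kiter p (n+1) η ζ * 1 :=
            mul_le_mul le_rfl (p_le_one hp0 hp1 ζ ξ) (hp0 ζ ξ) (kiter_nonneg hp0 (n+1) η ζ)
        _ = kiter p (n+1) η ζ := mul_one _
    -- now the computation
    have lhs : kiter p (n+1+1) η ξ = ∑' ζ, ∑' β, f ζ β := by
      show (∑' ζ, kiter p (n+1) η ζ * p ζ ξ) = _
      refine tsum_congr fun ζ => ?_
      rw [ih η ζ, ← tsum_mul_right]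
    have rhs : (∑' β : G, p η β * kiter p (n+1) β ξ) = ∑' β, ∑' ζ, f ζ β := by
      refine tsum_congr fun β => ?_
      show p η β * (∑' ζ, kiter p n β ζ * p ζ ξ) = _
      rw [← tsum_mul_left]
      exact tsum_congr fun ζ => by ring
    rw [lhs, rhs]
    exact (Summable.tsum_comm' hunc hrow hcol).symm

end Kernel

lemma exp_tsum_div (t : ℝ) : (∑' n : ℕ, t ^ n / (n.factorial : ℝ)) = Real.exp t := by
  rw [Real.exp_eq_exp_ℝ, NormedSpace.exp_eq_tsum_div]

lemma summable_expser {c : ℕ → ℝ} (hc : ∀ n, |c n| ≤ 1) (t : ℝ) :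
    Summable (fun n : ℕ => t ^ n / (n.factorial : ℝ) * c n) := by
  refine Summable.of_abs (Summable.of_nonneg_of_le (fun n => abs_nonneg _) (fun n => ?_)
    (Real.summable_pow_div_factorial |t|))
  rw [abs_mul, abs_div, abs_pow, Nat.abs_cast]
  calc |t| ^ n / (n.factorial : ℝ) * |c n| ≤ |t| ^ n / (n.factorial : ℝ) * 1 := by
        apply mul_le_mul le_rfl (hc n) (abs_nonneg _) (by positivity)
    _ = |t| ^ n / (n.factorial : ℝ) := mul_one _

lemma hasDerivAt_expser {c : ℕ → ℝ} (hc : ∀ n, |c n| ≤ 1) (t : ℝ) :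
    HasDerivAt (fun s : ℝ => ∑' n : ℕ, s ^ n / (n.factorial : ℝ) * c n)
      (∑' n : ℕ, t ^ n / (n.factorial : ℝ) * c (n + 1)) t := by
  set R : ℝ := |t| + 1 with hR
  have hRpos : 0 < R := by positivity
  set g : ℕ → ℝ → ℝ := fun n s => s ^ n / (n.factorial : ℝ) * c n with hg
  set g' : ℕ → ℝ → ℝ := fun n s => ((n : ℝ) * s ^ (n - 1)) / (n.factorial : ℝ) * c n with hg'
  set u : ℕ → ℝ := fun n => (n : ℝ) * R ^ (n - 1) / (n.factorial : ℝ) with hu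
  have hus : Summable u := by
    rw [← summable_nat_add_iff 1]
    refine (Real.summable_pow_div_factorial R).congr fun n => ?_
    simp only [hu, Nat.add_sub_cancel, Nat.factorial_succ, Nat.cast_mul]
    push_cast
    have hne : ((n:ℝ)+1) ≠ 0 := by positivity
    have hne2 : ((n.factorial:ℝ)) ≠ 0 := by positivity
    field_simp
  have hderiv : ∀ n (y : ℝ), y ∈ Set.Ioo (-R) R → HasDerivAt (g n) (g' n y) y := by
    intro n y _
    simpa [hg, hg', div_mul_eq_mul_div, mul_div_assoc] using
      (((hasDerivAt_pow n y).div_const (n.factorial : ℝ)).mul_const (c n))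
  have hbound : ∀ n (y : ℝ), y ∈ Set.Ioo (-R) R → ‖g' n y‖ ≤ u n := by
    intro n y hy
    have hyR : |y| ≤ R := by
      rw [abs_le]; exact ⟨hy.1.le, hy.2.le⟩
    simp only [hg', hu, Real.norm_eq_abs, abs_mul, abs_div, Nat.abs_cast, abs_pow]
    calc (n : ℝ) * |y| ^ (n-1) / (n.factorial : ℝ) * |c n|
        ≤ (n : ℝ) * R ^ (n-1) / (n.factorial : ℝ) * 1 := by
          apply mul_le_mul _ (hc n) (abs_nonneg _) (by positivity)
          apply div_le_div_of_nonneg_right ?_ (by positivity)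
          exact mul_le_mul le_rfl (pow_le_pow_left₀ (abs_nonneg y) hyR _) (by positivity)
            (Nat.cast_nonneg n)
      _ = u n := by rw [mul_one]
  have := hasDerivAt_tsum_of_isPreconnected hus isOpen_Ioo (convex_Ioo (-R) R).isPreconnected
    hderiv hbound (by simp [hRpos] : (0:ℝ) ∈ Set.Ioo (-R) R)
    (summable_expser hc 0) (by constructor <;> [linarith [abs_nonneg t, neg_abs_le t]; linarith [le_abs_self t]] : t ∈ Set.Ioo (-R) R)
  refine this.congr_deriv (Eq.symm ?_)
  have hsg' : Summable (fun n => g' n t) := by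
    refine Summable.of_norm (hus.of_nonneg_of_le (fun n => norm_nonneg _) ?_)
    intro n
    exact hbound n t (by constructor <;> [linarith [neg_abs_le t]; linarith [le_abs_self t]])
  rw [Summable.tsum_eq_zero_add hsg']
  have h0 : g' 0 t = 0 := by simp [hg']
  rw [h0, zero_add]
  refine tsum_congr fun n => ?_
  simp only [hg', Nat.add_sub_cancel, Nat.factorial_succ, Nat.cast_mul]
  have hne : ((n:ℝ)+1) ≠ 0 := by positivity
  have hne2 : ((n.factorial:ℝ)) ≠ 0 := by positivity
  push_cast
  field_simp

section Kernel2
variable {G : Type} {p : G → G → ℝ}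

lemma kiter_abs_le (hp0 : ∀ η ξ, 0 ≤ p η ξ) (hp1 : ∀ η, HasSum (p η) 1)
    (n : ℕ) (η ξ : G) : |kiter p n η ξ| ≤ 1 := by
  rw [abs_of_nonneg (kiter_nonneg hp0 n η ξ)]; exact kiter_le_one hp0 hp1 n η ξ

lemma ctk_nonneg (hp0 : ∀ η ξ, 0 ≤ p η ξ) {t : ℝ} (ht : 0 ≤ t) (η ξ : G) :
    0 ≤ ctk p t η ξ := by
  refine mul_nonneg (Real.exp_nonneg _) (tsum_nonneg fun n => ?_)
  have := kiter_nonneg hp0 n η ξ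
  positivity

lemma ctk_le_one (hp0 : ∀ η ξ, 0 ≤ p η ξ) (hp1 : ∀ η, HasSum (p η) 1)
    {t : ℝ} (ht : 0 ≤ t) (η ξ : G) : ctk p t η ξ ≤ 1 := by
  have hts : (∑' n : ℕ, t ^ n / (n.factorial : ℝ) * kiter p n η ξ)
      ≤ ∑' n : ℕ, t ^ n / (n.factorial : ℝ) := by
    refine Summable.tsum_le_tsum (fun n => ?_) (summable_expser (kiter_abs_le hp0 hp1 · η ξ) t)
      (Real.summable_pow_div_factorial t)
    calc t ^ n / (n.factorial : ℝ) * kiter p n η ξ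
        ≤ t ^ n / (n.factorial : ℝ) * 1 :=
          mul_le_mul le_rfl (kiter_le_one hp0 hp1 n η ξ) (kiter_nonneg hp0 n η ξ)
            (by positivity)
      _ = t ^ n / (n.factorial : ℝ) := mul_one _
  calc ctk p t η ξ ≤ Real.exp (-t) * Real.exp t := by
        refine mul_le_mul le_rfl ?_ (tsum_nonneg fun n => ?_) (Real.exp_nonneg _)
        · rw [← exp_tsum_div]; exact hts
        · have := kiter_nonneg hp0 n η ξ; positivity
    _ = 1 := by rw [← Real.exp_add]; simp

lemma summable_mul_ctk (hp0 : ∀ η ξ, 0 ≤ p η ξ) (hp1 : ∀ η, HasSum (p η) 1)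
    {t : ℝ} (ht : 0 ≤ t) (η ξ : G) :
    Summable (fun ζ : G => p η ζ * ctk p t ζ ξ) := by
  refine Summable.of_nonneg_of_le
    (fun ζ => mul_nonneg (hp0 η ζ) (ctk_nonneg hp0 ht ζ ξ)) (fun ζ => ?_) (hp1 η).summable
  calc p η ζ * ctk p t ζ ξ ≤ p η ζ * 1 :=
        mul_le_mul le_rfl (ctk_le_one hp0 hp1 ht ζ ξ) (ctk_nonneg hp0 ht ζ ξ) (hp0 η ζ)
    _ = p η ζ := mul_one _

lemma ctk_zero (η ξ : G) : ctk p 0 η ξ = if η = ξ then 1 else 0 := by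
  unfold ctk
  rw [tsum_eq_single 0 (fun n hn => by
    rw [zero_pow hn]; simp)]
  simp [kiter]

lemma hasDerivAt_ctk (hp0 : ∀ η ξ, 0 ≤ p η ξ) (hp1 : ∀ η, HasSum (p η) 1)
    {t : ℝ} (ht : 0 ≤ t) (η ξ : G) :
    HasDerivAt (fun s => ctk p s η ξ)
      ((∑' ζ : G, p η ζ * ctk p t ζ ξ) - ctk p t η ξ) t := by
  set c : ℕ → ℝ := fun n => kiter p n η ξ with hc
  have hcabs : ∀ n, |c n| ≤ 1 := fun n => kiter_abs_le hp0 hp1 n η ξ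
  have hser := hasDerivAt_expser hcabs t
  have hexp : HasDerivAt (fun s : ℝ => Real.exp (-s)) (-Real.exp (-t)) t := by
    simpa [Function.comp_def] using (Real.hasDerivAt_exp (-t)).comp t (hasDerivAt_neg t)
  have hmul := hexp.mul hser
  have hfun : (fun s : ℝ => Real.exp (-s) * ∑' n : ℕ, s ^ n / (n.factorial : ℝ) * c n)
      = fun s => ctk p s η ξ := rfl
  change HasDerivAt (fun s => ctk p s η ξ) _ t at hmul
  convert hmul using 1
  have key : Real.exp (-t) * (∑' n : ℕ, t ^ n / (n.factorial : ℝ) * c (n + 1))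
      = ∑' ζ : G, p η ζ * ctk p t ζ ξ := by
    set F : G → ℕ → ℝ := fun ζ n => p η ζ * (t ^ n / (n.factorial : ℝ) * kiter p n ζ ξ) with hF
    have hFnn : ∀ ζ n, 0 ≤ F ζ n := fun ζ n => by
      have h1 := hp0 η ζ; have h2 := kiter_nonneg hp0 n ζ ξ; positivity
    have hrow : ∀ ζ, Summable (F ζ) :=
      fun ζ => (summable_expser (kiter_abs_le hp0 hp1 · ζ ξ) t).mul_left _
    have hcol : ∀ n, Summable (fun ζ => F ζ n) := by
      intro n
      refine Summable.of_nonneg_of_le (fun ζ => hFnn ζ n) (fun ζ => ?_)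
        ((hp1 η).summable.mul_left (t ^ n / (n.factorial : ℝ)))
      calc F ζ n ≤ p η ζ * (t ^ n / (n.factorial : ℝ) * 1) := by
            refine mul_le_mul le_rfl (mul_le_mul le_rfl (kiter_le_one hp0 hp1 n ζ ξ)
              (kiter_nonneg hp0 n ζ ξ) (by positivity)) ?_ (hp0 η ζ)
            have := kiter_nonneg hp0 n ζ ξ
            positivity
        _ = t ^ n / (n.factorial : ℝ) * p η ζ := by ring
    have hrowsum : ∀ ζ, (∑' n, F ζ n) ≤ Real.exp t * p η ζ := by
      intro ζ
      have : (∑' n, F ζ n) = p η ζ * ∑' n, t ^ n / (n.factorial : ℝ) * kiter p n ζ ξ :=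
        tsum_mul_left
      rw [this]
      have h2 : (∑' n : ℕ, t ^ n / (n.factorial : ℝ) * kiter p n ζ ξ) ≤ Real.exp t := by
        rw [← exp_tsum_div]
        refine Summable.tsum_le_tsum (fun n => ?_) (summable_expser (kiter_abs_le hp0 hp1 · ζ ξ) t)
          (Real.summable_pow_div_factorial t)
        calc t ^ n / (n.factorial : ℝ) * kiter p n ζ ξ ≤ t ^ n / (n.factorial : ℝ) * 1 :=
              mul_le_mul le_rfl (kiter_le_one hp0 hp1 n ζ ξ) (kiter_nonneg hp0 n ζ ξ)
                (by positivity)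
          _ = _ := mul_one _
      calc p η ζ * ∑' n, t ^ n / (n.factorial : ℝ) * kiter p n ζ ξ
          ≤ p η ζ * Real.exp t := mul_le_mul le_rfl h2 (tsum_nonneg fun n => by
              have := kiter_nonneg hp0 n ζ ξ; positivity) (hp0 η ζ)
        _ = Real.exp t * p η ζ := mul_comm _ _
    have hunc : Summable (Function.uncurry F) := by
      refine (summable_prod_of_nonneg (fun q => hFnn q.1 q.2)).mpr ⟨hrow, ?_⟩
      refine Summable.of_nonneg_of_le (fun ζ => tsum_nonneg (hFnn ζ)) hrowsum
        ((hp1 η).summable.mul_left _)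
    have hswap := Summable.tsum_comm' hunc hrow hcol
    have hA : (∑' n : ℕ, t ^ n / (n.factorial : ℝ) * c (n + 1)) = ∑' n, ∑' ζ, F ζ n := by
      refine tsum_congr fun n => ?_
      simp only [hc]
      rw [kiter_succ_left hp0 hp1 n η ξ, ← tsum_mul_left]
      exact tsum_congr fun ζ => by ring
    rw [hA, hswap, ← tsum_mul_left]
    refine tsum_congr fun ζ => ?_
    rw [show (∑' n, F ζ n) = p η ζ * ∑' n, t ^ n / (n.factorial : ℝ) * kiter p n ζ ξ from
      tsum_mul_left]
    unfold ctk
    ring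
  rw [← key]
  show _ = -Real.exp (-t) * (∑' n : ℕ, t ^ n / (n.factorial : ℝ) * c n) + Real.exp (-t) * _
  unfold ctk
  ring

end Kernel2


/-! ### STATEMENT 18: explicit first moments for branching random walk with
immigration -/

theorem branching_rw_immigration_first_moments
    {G : Type} [AddCommGroup G] [Countable G]
    (a : G → G → ℝ) (ha : IsRWKernel a)
    (γ K lam : ℝ) (hγ : 0 < γ) (hK : 0 < K) (hlam : 0 < lam)
    (α0 : G → ℝ) (hα0pos : ∀ ξ, 0 ≤ α0 ξ) (hα0fin : (Function.support α0).Finite)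
    (π0 : G → ℕ) (hπ0fin : (Function.support π0).Finite)
    (h : G → ℝ → ℝ)
    (hdef : h = fun ξ t => Real.exp (γ * K * t) *
      ∑' η : G, ctk (abar a) t ξ η *
        (α0 η + (lam / K) * (1 - Real.exp (-(γ * K * t))) * (π0 η : ℝ))) :
    (∀ ξ : G, h ξ 0 = α0 ξ) ∧
    ∀ (ξ : G) (t : ℝ), 0 ≤ t →
      HasDerivAt (fun s => h ξ s)
        ((∑' η : G, (abar a ξ η - (if ξ = η then (1:ℝ) else 0)) * h η t)
          + γ * K * h ξ t
          + γ * lam * ∑' η : G, (π0 η : ℝ) * ctk a t η ξ) t := by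
  have ha0 : ∀ η ξ : G, 0 ≤ a η ξ := ha.nonneg
  have hp0 : ∀ η ξ : G, 0 ≤ abar a η ξ := fun η ξ => ha.nonneg ξ η
  have ha1 : ∀ η : G, HasSum (a η) 1 := by
    intro η
    have h1 : HasSum (fun ξ => a 0 (ξ - η)) 1 := (Equiv.subRight η).hasSum_iff.mpr ha.total
    have h2 : a η = fun ξ => a 0 (ξ - η) := funext (ha.homog η)
    rw [h2]; exact h1
  have hp1 : ∀ η : G, HasSum (abar a η) 1 := by
    intro η
    have h1 : HasSum (fun ξ => a 0 (η - ξ)) 1 := (Equiv.subLeft η).hasSum_iff.mpr ha.total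
    have h2 : abar a η = fun ξ => a 0 (η - ξ) := funext fun ξ => ha.homog ξ η
    rw [h2]; exact h1
  have hkab : ∀ (n : ℕ) (ξ η : G), kiter (abar a) n ξ η = kiter a n η ξ := by
    intro n
    induction n with
    | zero => intro ξ η; simp only [kiter]; exact if_congr eq_comm rfl rfl
    | succ n ih =>
      intro ξ η
      show (∑' ζ : G, kiter (abar a) n ξ ζ * abar a ζ η) = kiter a (n+1) η ξ
      rw [kiter_succ_left ha0 ha1 n η ξ]
      exact tsum_congr fun ζ => by rw [ih ξ ζ]; unfold abar; ring
  have hcab : ∀ (t : ℝ) (ξ η : G), ctk (abar a) t ξ η = ctk a t η ξ := by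
    intro t ξ η; unfold ctk; congr 1; exact tsum_congr fun n => by rw [hkab n ξ η]
  set S : Finset G := hα0fin.toFinset ∪ hπ0fin.toFinset with hSdef
  have hSα : ∀ η, η ∉ S → α0 η = 0 := by
    intro η hη
    rw [hSdef, Finset.mem_union] at hη
    push_neg at hη
    have := hη.1
    rw [Set.Finite.mem_toFinset, Function.mem_support, not_not] at this
    exact this
  have hSπ : ∀ η, η ∉ S → π0 η = 0 := by
    intro η hη
    rw [hSdef, Finset.mem_union] at hη
    push_neg at hη
    have := hη.2
    rw [Set.Finite.mem_toFinset, Function.mem_support, not_not] at this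
    exact this
  have hrepr : ∀ (ζ : G) (s : ℝ), h ζ s = Real.exp (γ*K*s) *
      ∑ η ∈ S, ctk (abar a) s ζ η
        * (α0 η + (lam/K)*(1-Real.exp (-(γ*K*s)))*(π0 η : ℝ)) := by
    intro ζ s
    rw [hdef]
    simp only
    congr 1
    refine tsum_eq_sum fun η hη => ?_
    rw [hSα η hη, hSπ η hη]
    norm_num
  constructor
  · intro ξ
    rw [hrepr ξ 0]
    have e0 : γ * K * (0:ℝ) = 0 := mul_zero _
    rw [e0]
    simp only [neg_zero, Real.exp_zero, sub_self, mul_zero, zero_mul, add_zero, one_mul,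
      ctk_zero]
    have hcongr : ∀ η ∈ S, (if ξ = η then (1:ℝ) else 0) * α0 η
        = if ξ = η then α0 η else 0 := fun η _ => by split_ifs <;> simp
    rw [Finset.sum_congr rfl hcongr, Finset.sum_ite_eq]
    split_ifs with hmem
    · rfl
    · exact (hSα ξ hmem).symm
  · intro ξ t ht
    have hKne : K ≠ 0 := ne_of_gt hK
    -- derivative building blocks
    have l1 : HasDerivAt (fun s : ℝ => γ*K*s) (γ*K) t := by
      simpa using (hasDerivAt_id t).const_mul (γ*K)
    have hE' : HasDerivAt (fun s : ℝ => Real.exp (γ*K*s)) (γ*K*Real.exp (γ*K*t)) t := by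
      have := l1.exp
      simpa [mul_comm] using this
    have hcd : ∀ η : G, HasDerivAt
        (fun s : ℝ => α0 η + (lam/K)*(1-Real.exp (-(γ*K*s)))*(π0 η : ℝ))
        (γ*lam*Real.exp (-(γ*K*t))*(π0 η : ℝ)) t := by
      intro η
      have l2 : HasDerivAt (fun s : ℝ => -(γ*K*s)) (-(γ*K)) t := l1.neg
      have l3 := l2.exp
      have l4 := l3.const_sub 1
      have l5 := ((l4.const_mul (lam/K)).mul_const ((π0 η : ℝ))).const_add (α0 η)
      refine l5.congr_deriv (Eq.symm ?_)
      field_simp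
    have hud : ∀ η : G, HasDerivAt (fun s => ctk (abar a) s ξ η)
        ((∑' ζ : G, abar a ξ ζ * ctk (abar a) t ζ η) - ctk (abar a) t ξ η) t :=
      fun η => hasDerivAt_ctk hp0 hp1 ht ξ η
    have hsd : HasDerivAt
        (fun s : ℝ => ∑ η ∈ S, ctk (abar a) s ξ η
          * (α0 η + (lam/K)*(1-Real.exp (-(γ*K*s)))*(π0 η : ℝ)))
        (∑ η ∈ S,
          (((∑' ζ : G, abar a ξ ζ * ctk (abar a) t ζ η) - ctk (abar a) t ξ η)
              * (α0 η + (lam/K)*(1-Real.exp (-(γ*K*t)))*(π0 η : ℝ))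
            + ctk (abar a) t ξ η * (γ*lam*Real.exp (-(γ*K*t))*(π0 η : ℝ)))) t :=
      HasDerivAt.fun_sum fun η _ => (hud η).mul (hcd η)
    have hD := hE'.mul hsd
    have hfun : (fun s => h ξ s) = (fun s : ℝ => Real.exp (γ*K*s) *
        ∑ η ∈ S, ctk (abar a) s ξ η
          * (α0 η + (lam/K)*(1-Real.exp (-(γ*K*s)))*(π0 η : ℝ))) :=
      funext fun s => hrepr ξ s
    rw [hfun]
    refine hD.congr_deriv (Eq.symm ?_)
    -- now prove the value equality
    have hcnn : ∀ η : G, 0 ≤ α0 η + (lam/K)*(1-Real.exp (-(γ*K*t)))*(π0 η : ℝ) := by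
      intro η
      have hex : Real.exp (-(γ*K*t)) ≤ 1 := by
        rw [Real.exp_le_one_iff]
        have : 0 ≤ γ*K*t := by positivity
        linarith
      have h1 : (0:ℝ) ≤ 1 - Real.exp (-(γ*K*t)) := by linarith
      have h2 : (0:ℝ) ≤ (π0 η : ℝ) := Nat.cast_nonneg _
      have h3 : (0:ℝ) ≤ lam/K := by positivity
      have := hα0pos η
      positivity
    have hhnn : ∀ η : G, 0 ≤ h η t := by
      intro η
      rw [hrepr η t]
      refine mul_nonneg (Real.exp_nonneg _) (Finset.sum_nonneg fun η' _ => ?_)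
      exact mul_nonneg (ctk_nonneg hp0 ht η η') (hcnn η')
    set C : ℝ := Real.exp (γ*K*t) *
      ∑ η' ∈ S, (α0 η' + (lam/K)*(1-Real.exp (-(γ*K*t)))*(π0 η' : ℝ)) with hCdef
    have hhle : ∀ η : G, h η t ≤ C := by
      intro η
      rw [hrepr η t, hCdef]
      refine mul_le_mul le_rfl (Finset.sum_le_sum fun η' _ => ?_) (Finset.sum_nonneg
        fun η' _ => mul_nonneg (ctk_nonneg hp0 ht η η') (hcnn η')) (Real.exp_nonneg _)
      calc ctk (abar a) t η η' * (α0 η' + (lam/K)*(1-Real.exp (-(γ*K*t)))*(π0 η' : ℝ))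
          ≤ 1 * (α0 η' + (lam/K)*(1-Real.exp (-(γ*K*t)))*(π0 η' : ℝ)) :=
            mul_le_mul (ctk_le_one hp0 hp1 ht η η') le_rfl (hcnn η')
              zero_le_one
        _ = _ := one_mul _
    have hsummable_ah : Summable (fun η => abar a ξ η * h η t) := by
      refine Summable.of_nonneg_of_le (fun η => mul_nonneg (hp0 ξ η) (hhnn η)) (fun η => ?_)
        ((hp1 ξ).summable.mul_right C)
      exact mul_le_mul le_rfl (hhle η) (hhnn η) (hp0 ξ η)
    have hδs : Summable (fun η => (if ξ = η then (1:ℝ) else 0) * h η t) := by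
      refine summable_of_ne_finset_zero (s := {ξ}) fun η hη => ?_
      rw [Finset.mem_singleton] at hη
      rw [if_neg (fun e => hη e.symm), zero_mul]
    have hδval : (∑' η : G, (if ξ = η then (1:ℝ) else 0) * h η t) = h ξ t := by
      rw [tsum_eq_single ξ (fun η hη => by rw [if_neg (fun e => hη e.symm), zero_mul])]
      rw [if_pos rfl, one_mul]
    have hsub : (∑' η : G, (abar a ξ η - (if ξ = η then (1:ℝ) else 0)) * h η t)
        = (∑' η : G, abar a ξ η * h η t) - h ξ t := by
      rw [tsum_congr fun η => sub_mul (abar a ξ η) _ (h η t),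
        Summable.tsum_sub hsummable_ah hδs, hδval]
    have hveq : (∑' η : G, abar a ξ η * h η t)
        = ∑ η ∈ S, (Real.exp (γ*K*t) * (α0 η + (lam/K)*(1-Real.exp (-(γ*K*t)))*(π0 η : ℝ)))
            * ∑' ζ : G, abar a ξ ζ * ctk (abar a) t ζ η := by
      have h1 : ∀ ζ : G, abar a ξ ζ * h ζ t
          = ∑ η ∈ S, abar a ξ ζ * (Real.exp (γ*K*t)
              * (ctk (abar a) t ζ η
                * (α0 η + (lam/K)*(1-Real.exp (-(γ*K*t)))*(π0 η : ℝ)))) := by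
        intro ζ
        rw [hrepr ζ t, Finset.mul_sum, Finset.mul_sum]
      rw [tsum_congr h1, Summable.tsum_finsetSum (fun η _ => ?_)]
      · refine Finset.sum_congr rfl fun η _ => ?_
        rw [← tsum_mul_left]
        exact tsum_congr fun ζ => by ring
      · exact ((summable_mul_ctk hp0 hp1 ht ξ η).mul_left
          (Real.exp (γ*K*t) * (α0 η + (lam/K)*(1-Real.exp (-(γ*K*t)))*(π0 η : ℝ)))).congr
          fun ζ => by ring
    have hpi : (∑' η : G, (π0 η : ℝ) * ctk a t η ξ)
        = ∑ η ∈ S, (π0 η : ℝ) * ctk (abar a) t ξ η := by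
      rw [tsum_eq_sum (s := S) (fun η hη => by rw [hSπ η hη]; norm_num)]
      exact Finset.sum_congr rfl fun η _ => by rw [hcab t ξ η]
    rw [hsub, hveq, hpi, hrepr ξ t]
    have key : Real.exp (γ*K*t) * Real.exp (-(γ*K*t)) = 1 := by
      rw [← Real.exp_add]; ring_nf; exact Real.exp_zero
    simp only [Finset.mul_sum]
    rw [← Finset.sum_sub_distrib, ← Finset.sum_add_distrib, ← Finset.sum_add_distrib,
      ← Finset.sum_add_distrib]
    refine Finset.sum_congr rfl fun η _ => ?_
    linear_combination (-(γ*lam*(π0 η : ℝ)*ctk (abar a) t ξ η)) * key
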